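/- In the capacitated continuous MNL model, the optimal revenues under two preference functions are close when the functions are close in L¹: if ρ* is the optimal revenue under v and ρ̂ is the optimal revenue under v̂ (both with capacity c), then |ρ* − ρ̂| ≤ ‖v − v̂‖₁. -/

import Mathlib

open MeasureTheory Set

lemma key17 (w v vhat : ℝ → ℝ)
    (hw_range : ∀ x ∈ Icc (0:ℝ) 1, w x ∈ Icc (0:ℝ) 1)
    (hw_meas : Measurable w)
    (hv_int : IntegrableOn v (Icc 0 1)) (hv_nonneg : ∀ x, 0 ≤ v x)
    (hvhat_int : IntegrableOn vhat (Icc 0 1)) (hvhat_nonneg : ∀ x, 0 ≤ vhat x)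
    (S : Set ℝ) (hS : MeasurableSet S) (hSsub : S ⊆ Icc 0 1) :
    (∫ x in S, v x * w x) / (1 + ∫ x in S, v x) ≤
      (∫ x in S, vhat x * w x) / (1 + ∫ x in S, vhat x) +
        ∫ x in Icc (0:ℝ) 1, |v x - vhat x| := by
  set A := ∫ x in S, v x * w x with hA
  set B := ∫ x in S, v x with hB
  set A' := ∫ x in S, vhat x * w x with hA'
  set B' := ∫ x in S, vhat x with hB'
  have Iv : IntegrableOn v S := hv_int.mono_set hSsub
  have Iv' : IntegrableOn vhat S := hvhat_int.mono_set hSsub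
  have Ivw : IntegrableOn (fun x => v x * w x) S := by
    refine Integrable.mono' Iv (Iv.aestronglyMeasurable.mul hw_meas.aestronglyMeasurable) ?_
    refine (ae_restrict_iff' hS).2 (.of_forall fun x hx => ?_)
    have hwx := hw_range x (hSsub hx)
    rw [Real.norm_eq_abs, abs_mul, abs_of_nonneg (hv_nonneg x)]
    calc v x * |w x| ≤ v x * 1 := by
          exact mul_le_mul_of_nonneg_left (abs_le.2 ⟨by linarith [hwx.1], hwx.2⟩) (hv_nonneg x)
      _ = v x := mul_one _
  have Ivw' : IntegrableOn (fun x => vhat x * w x) S := by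
    refine Integrable.mono' Iv' (Iv'.aestronglyMeasurable.mul hw_meas.aestronglyMeasurable) ?_
    refine (ae_restrict_iff' hS).2 (.of_forall fun x hx => ?_)
    have hwx := hw_range x (hSsub hx)
    rw [Real.norm_eq_abs, abs_mul, abs_of_nonneg (hvhat_nonneg x)]
    calc vhat x * |w x| ≤ vhat x * 1 := by
          exact mul_le_mul_of_nonneg_left (abs_le.2 ⟨by linarith [hwx.1], hwx.2⟩) (hvhat_nonneg x)
      _ = vhat x := mul_one _
  have hB0 : 0 ≤ B := setIntegral_nonneg hS fun x _ => hv_nonneg x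
  have hB'0 : 0 ≤ B' := setIntegral_nonneg hS fun x _ => hvhat_nonneg x
  have hA0 : 0 ≤ A := setIntegral_nonneg hS fun x hx =>
    mul_nonneg (hv_nonneg x) (hw_range x (hSsub hx)).1
  have hAB : A ≤ B := by
    refine setIntegral_mono_on Ivw Iv hS fun x hx => ?_
    have hwx := hw_range x (hSsub hx)
    calc v x * w x ≤ v x * 1 := mul_le_mul_of_nonneg_left hwx.2 (hv_nonneg x)
      _ = v x := mul_one _
  set ρ := A / (1 + B) with hρ
  have hρ0 : 0 ≤ ρ := div_nonneg hA0 (by linarith)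
  have hρ1 : ρ ≤ 1 := by
    rw [hρ, div_le_one (by linarith)]; linarith
  set N := ∫ x in S, (v x - vhat x) * (w x - ρ) with hN
  have IN : IntegrableOn (fun x => (v x - vhat x) * (w x - ρ)) S := by
    have : (fun x => (v x - vhat x) * (w x - ρ)) =
        fun x => (v x * w x - vhat x * w x) - ρ * (v x - vhat x) := by
      ext x; ring
    rw [this]
    exact ((Ivw.sub Ivw').sub ((Iv.sub Iv').const_mul ρ))
  have hNeq : N = A - A' - ρ * (B - B') := by
    have h1 : ∫ x in S, (v x * w x - vhat x * w x) = A - A' := integral_sub Ivw Ivw'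
    have h2 : ∫ x in S, ρ * (v x - vhat x) = ρ * (B - B') := by
      rw [integral_const_mul, integral_sub Iv Iv']
    have heq : (fun x => (v x - vhat x) * (w x - ρ)) =
        fun x => (v x * w x - vhat x * w x) - ρ * (v x - vhat x) := by
      ext x; ring
    rw [hN, heq, integral_sub (f := fun x => v x * w x - vhat x * w x)
      (g := fun x => ρ * (v x - vhat x)) (Ivw.sub Ivw') ((Iv.sub Iv').const_mul ρ), h1, h2]
  have hEq : A / (1 + B) - A' / (1 + B') = N / (1 + B') := by
    rw [hNeq, hρ]
    field_simp
    ring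
  have hIabs : IntegrableOn (fun x => |v x - vhat x|) (Icc (0:ℝ) 1) := (hv_int.sub hvhat_int).abs
  have hNle : |N| ≤ ∫ x in Icc (0:ℝ) 1, |v x - vhat x| := by
    calc |N| ≤ ∫ x in S, |v x - vhat x| * |w x - ρ| := by
          simpa [Real.norm_eq_abs, abs_mul] using
            norm_integral_le_integral_norm (μ := volume.restrict S)
              (fun x => (v x - vhat x) * (w x - ρ))
      _ ≤ ∫ x in S, |v x - vhat x| := by
          refine setIntegral_mono_on (by simpa [abs_mul, IntegrableOn] using IN.abs)
            ((Iv.sub Iv').abs) hS fun x hx => ?_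
          have hwx := hw_range x (hSsub hx)
          calc |v x - vhat x| * |w x - ρ| ≤ |v x - vhat x| * 1 :=
                mul_le_mul_of_nonneg_left
                  (abs_le.2 ⟨by linarith [hwx.1], by linarith [hwx.2]⟩) (abs_nonneg _)
            _ = |v x - vhat x| := mul_one _
      _ ≤ ∫ x in Icc (0:ℝ) 1, |v x - vhat x| := by
          refine setIntegral_mono_set hIabs (.of_forall fun x => abs_nonneg _) (.of_forall hSsub)
  have hb : (0:ℝ) < 1 + B' := by linarith
  have hdiv : N / (1 + B') ≤ |N| :=
    le_trans ((div_le_div_iff_of_pos_right hb).2 (le_abs_self N)) (div_le_self (abs_nonneg N) (by linarith))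
  linarith [hEq, hdiv, hNle]

theorem stmt17 (c : ℝ) (hc : c ∈ Ioc (0:ℝ) 1) (w v vhat : ℝ → ℝ)
    (hw_meas : Measurable w)
    (hw_range : ∀ x ∈ Icc (0:ℝ) 1, w x ∈ Icc (0:ℝ) 1)
    (hv_int : IntegrableOn v (Icc 0 1)) (hv_nonneg : ∀ x, 0 ≤ v x)
    (hvhat_int : IntegrableOn vhat (Icc 0 1)) (hvhat_nonneg : ∀ x, 0 ≤ vhat x)
    (ρstar ρhat : ℝ)
    (hρstar : IsGreatest {r : ℝ | ∃ S : Set ℝ, MeasurableSet S ∧ S ⊆ Icc 0 1 ∧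
      (volume S).toReal ≤ c ∧
      (∫ x in S, v x * w x) / (1 + ∫ x in S, v x) = r} ρstar)
    (hρhat : IsGreatest {r : ℝ | ∃ S : Set ℝ, MeasurableSet S ∧ S ⊆ Icc 0 1 ∧
      (volume S).toReal ≤ c ∧
      (∫ x in S, vhat x * w x) / (1 + ∫ x in S, vhat x) = r} ρhat) :
    |ρstar - ρhat| ≤ ∫ x in Icc (0:ℝ) 1, |v x - vhat x| := by
  obtain ⟨ρstar_mem, ρstar_ub⟩ := hρstar
  obtain ⟨ρhat_mem, ρhat_ub⟩ := hρhat
  obtain ⟨S, hSm, hSsub, hSc, hSeq⟩ := ρstar_mem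
  obtain ⟨T, hTm, hTsub, hTc, hTeq⟩ := ρhat_mem
  set ε := ∫ x in Icc (0:ℝ) 1, |v x - vhat x| with hε
  have hεsymm : (∫ x in Icc (0:ℝ) 1, |vhat x - v x|) = ε := by
    simp only [hε, abs_sub_comm]
  have h1 : ρstar ≤ ρhat + ε := by
    have hk := key17 w v vhat hw_range hw_meas hv_int hv_nonneg hvhat_int hvhat_nonneg
      S hSm hSsub
    have hmem : (∫ x in S, vhat x * w x) / (1 + ∫ x in S, vhat x) ≤ ρhat :=
      ρhat_ub ⟨S, hSm, hSsub, hSc, rfl⟩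
    rw [hSeq] at hk
    linarith
  have h2 : ρhat ≤ ρstar + ε := by
    have hk := key17 w vhat v hw_range hw_meas hvhat_int hvhat_nonneg hv_int hv_nonneg
      T hTm hTsub
    have hmem : (∫ x in T, v x * w x) / (1 + ∫ x in T, v x) ≤ ρstar :=
      ρstar_ub ⟨T, hTm, hTsub, hTc, rfl⟩
    rw [hTeq, hεsymm] at hk
    linarith
  rw [abs_sub_le_iff]
  constructor <;> linarith
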